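/- arXiv:1409.5044 — 2 statements merged into one kernel-verified Lean document; each statement's English description precedes it below -/
import Mathlib

section
/- Let K be a field with a surjective discrete valuation ν and valuation ring O. Let g be a nonzero Laurent polynomial in n variables over K with all coefficients in O, let ω ∈ ℤⁿ, and suppose init_ω(g) = c X^α is a single term with ν(c) = 0. Then for every x ∈ (Kˣ)ⁿ with ν(x) = ω one has ν(g(x)) = ⟨α,ω⟩; in particular, ν(g(x)) ≥ 0 if and only if ⟨α,ω⟩ ≥ 0. -/
noncomputable section

/-- Standard inner product of an integer vector with a real vector. -/
def ipR {n : ℕ} (α : Fin n → ℤ) (ω : Fin n → ℝ) : ℝ := ∑ i, (α i : ℝ) * ω i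

/-- Standard inner product of two integer vectors. -/
def ipZ {n : ℕ} (α ω : Fin n → ℤ) : ℤ := ∑ i, α i * ω i

open scoped Classical in
/-- Initial form `init_ω(f)` of a Laurent polynomial `f` in the direction `ω`. -/
def initForm {K : Type*} [Field K] {n : ℕ} (ω : Fin n → ℝ)
    (f : (Fin n → ℤ) →₀ K) : (Fin n → ℤ) →₀ K :=
  Finsupp.filter (fun α => ∀ β ∈ f.support, ipR α ω ≤ ipR β ω) f

/-- Evaluation of a Laurent polynomial at a point of the torus `(Kˣ)ⁿ`. -/
def evalL {K : Type*} [Field K] {n : ℕ} (f : (Fin n → ℤ) →₀ K) (x : Fin n → Kˣ) : K :=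
  ∑ α ∈ f.support, f α * ∏ i, ((x i ^ (α i) : Kˣ) : K)

-- aux: valuation of a zpow
lemma val_zpow {K : Type*} [Field K] (v : AddValuation K (WithTop ℤ))
    {y : K} {k : ℤ} (hy : v y = (k : WithTop ℤ)) (m : ℤ) :
    v (y ^ m) = ((m * k : ℤ) : WithTop ℤ) := by
  have hy0 : y ≠ 0 := by
    intro h; rw [h, AddValuation.map_zero] at hy; exact (WithTop.coe_ne_top hy.symm)
  induction m using Int.induction_on with
  | zero => simp
  | succ m ih =>
      rw [zpow_add_one₀ hy0, AddValuation.map_mul, ih, hy, ← WithTop.coe_add,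
        WithTop.coe_eq_coe]
      ring
  | pred m ih =>
      rw [zpow_sub_one₀ hy0, AddValuation.map_mul, ih, AddValuation.map_inv, hy,
        ← WithTop.LinearOrderedAddCommGroup.coe_neg, ← WithTop.coe_add, WithTop.coe_eq_coe]
      ring

lemma val_prod {K : Type*} [Field K] (v : AddValuation K (WithTop ℤ))
    {ι : Type*} (s : Finset ι) (f : ι → K) :
    v (∏ i ∈ s, f i) = ∑ i ∈ s, v (f i) := by
  induction s using Finset.cons_induction with
  | empty => simp
  | cons a s ha ih => rw [Finset.prod_cons, AddValuation.map_mul, ih, Finset.sum_cons]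

/-- If `g` is a nonzero Laurent polynomial with coefficients in the valuation
ring whose initial form in the direction `ω ∈ ℤⁿ` is a single term `c X^α` with
`ν(c) = 0`, then `ν(g(x)) = ⟨α, ω⟩` for all `x ∈ (Kˣ)ⁿ` with `ν(x) = ω`; in
particular `ν(g(x)) ≥ 0` iff `⟨α, ω⟩ ≥ 0`. -/
theorem valuation_eval_of_initForm_term {K : Type*} [Field K] {n : ℕ}
    (v : AddValuation K (WithTop ℤ))
    (hsurj : ∀ m : ℤ, ∃ y : K, v y = (m : WithTop ℤ))
    (hker : ∀ y : K, v y = ⊤ → y = 0)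
    (g : (Fin n → ℤ) →₀ K) (hg : g ≠ 0)
    (hcoeff : ∀ β, 0 ≤ v (g β))
    (ω : Fin n → ℤ)
    (α : Fin n → ℤ) (c : K) (hc : v c = (0 : WithTop ℤ))
    (hinit : initForm (fun i => (ω i : ℝ)) g = Finsupp.single α c)
    (x : Fin n → Kˣ) (hx : ∀ i, v ((x i : K)) = (ω i : WithTop ℤ)) :
    v (evalL g x) = (ipZ α ω : WithTop ℤ) ∧
      (0 ≤ v (evalL g x) ↔ 0 ≤ ipZ α ω) := by
  classical
  have hc0 : c ≠ 0 := by
    intro h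
    rw [h, AddValuation.map_zero] at hc
    exact (WithTop.coe_ne_top (a := (0:ℤ)) hc.symm)
  have hipR : ∀ δ : Fin n → ℤ, ipR δ (fun i => (ω i : ℝ)) = ((ipZ δ ω : ℤ) : ℝ) := by
    intro δ
    unfold ipR ipZ
    push_cast
    rfl
  have happ : ∀ γ, (initForm (fun i => (ω i : ℝ)) g) γ = Finsupp.single α c γ := by
    intro γ; rw [hinit]
  have hPα : ∀ β ∈ g.support, ipZ α ω ≤ ipZ β ω := by
    by_contra h
    have h2 := happ α
    have : ¬ ∀ β ∈ g.support,
        ipR α (fun i => (ω i : ℝ)) ≤ ipR β (fun i => (ω i : ℝ)) := by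
      intro hall
      exact h (fun β hβ => by exact_mod_cast (hipR α ▸ hipR β ▸ hall β hβ))
    rw [Finsupp.single_eq_same] at h2
    simp only [initForm, Finsupp.filter_apply, if_neg this] at h2
    exact hc0 h2.symm
  have hPα' : ∀ β ∈ g.support,
      ipR α (fun i => (ω i : ℝ)) ≤ ipR β (fun i => (ω i : ℝ)) := by
    intro β hβ
    rw [hipR α, hipR β]
    exact_mod_cast hPα β hβ
  have hgα : g α = c := by
    have h2 := happ α
    rw [Finsupp.single_eq_same] at h2
    simpa only [initForm, Finsupp.filter_apply, if_pos hPα'] using h2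
  have hαsupp : α ∈ g.support := by
    rw [Finsupp.mem_support_iff, hgα]; exact hc0
  have hstrict : ∀ β ∈ g.support, β ≠ α → ipZ α ω < ipZ β ω := by
    intro β hβ hne
    have h2 := happ β
    rw [Finsupp.single_eq_of_ne' (fun h => hne h.symm)] at h2
    simp only [initForm, Finsupp.filter_apply] at h2
    have hgβ : g β ≠ 0 := Finsupp.mem_support_iff.mp hβ
    have hnP : ¬ ∀ γ ∈ g.support,
        ipR β (fun i => (ω i : ℝ)) ≤ ipR γ (fun i => (ω i : ℝ)) := by
      intro hall
      rw [if_pos hall] at h2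
      exact hgβ h2
    push_neg at hnP
    obtain ⟨γ, hγ, hlt⟩ := hnP
    have : ipR α (fun i => (ω i : ℝ)) < ipR β (fun i => (ω i : ℝ)) :=
      lt_of_le_of_lt (hPα' γ hγ) hlt
    rw [hipR α, hipR β] at this
    exact_mod_cast this
  set t : (Fin n → ℤ) → K := fun β => g β * ∏ i, ((x i ^ (β i) : Kˣ) : K) with ht
  have hvt : ∀ β, v (t β) = v (g β) + ((ipZ β ω : ℤ) : WithTop ℤ) := by
    intro β
    rw [ht]
    simp only
    rw [AddValuation.map_mul, val_prod]
    congr 1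
    have hterm : ∀ i : Fin n, v ((x i ^ (β i) : Kˣ) : K) = ((β i * ω i : ℤ) : WithTop ℤ) := by
      intro i
      rw [Units.val_zpow_eq_zpow_val]
      exact val_zpow v (hx i) (β i)
    rw [Finset.sum_congr rfl (fun i _ => hterm i), ← WithTop.coe_sum]
    rfl
  have hvtα : v (t α) = ((ipZ α ω : ℤ) : WithTop ℤ) := by
    rw [hvt α, hgα, hc, zero_add]
  have heval : evalL g x = t α + ∑ β ∈ g.support \ {α}, t β := by
    rw [evalL, Finset.sum_eq_add_sum_sdiff_singleton_of_mem hαsupp]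
  have hrest : v (t α) < v (∑ β ∈ g.support \ {α}, t β) := by
    rw [hvtα]
    refine AddValuation.map_lt_sum v (WithTop.coe_ne_top) ?_
    intro β hβ
    rw [Finset.mem_sdiff, Finset.mem_singleton] at hβ
    have h1 : ((ipZ β ω : ℤ) : WithTop ℤ) ≤ v (t β) := by
      rw [hvt β]
      calc ((ipZ β ω : ℤ) : WithTop ℤ) = 0 + ((ipZ β ω : ℤ) : WithTop ℤ) := (zero_add _).symm
        _ ≤ v (g β) + ((ipZ β ω : ℤ) : WithTop ℤ) := add_le_add_left (hcoeff β) _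
    exact lt_of_lt_of_le (by exact_mod_cast hstrict β hβ.1 hβ.2) h1
  have hmain : v (evalL g x) = ((ipZ α ω : ℤ) : WithTop ℤ) := by
    rw [heval, AddValuation.map_add_eq_of_lt_left v (hvtα ▸ hrest), hvtα]
  refine ⟨hmain, ?_⟩
  rw [hmain]
  constructor <;> intro h <;> exact_mod_cast h
end
end

section
/- Let K be a field with a surjective discrete valuation ν and valuation ring O, and let C₀ ⊆ ℝⁿ be a rational half-open cone. Let f₁ be a nonzero Laurent polynomial over K with all coefficients in O which is C₀-balanced with initial form init_{C₀}(f₁) = c X^α a single term satisfying ν(c) = 0, and let f₂,…,f_r be arbitrary Laurent polynomials over K. Then for every x ∈ (Kˣ)ⁿ with ν(x) ∈ C₀ ∩ ℤⁿ one has ν(f₁(x)) = ⟨α, ν(x)⟩ = ν((cX^α)(x)); consequently min( ν(f₁(x)), ν(f₂(x)), …, ν(f_r(x)) ) = min( ν((cX^α)(x)), ν(f₂(x)), …, ν(f_r(x)) ). -/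
noncomputable section

/-- A rational half-open cone in ℝⁿ. -/
def IsRatHalfOpenCone {n : ℕ} (C : Set (Fin n → ℝ)) : Prop :=
  ∃ (d e : ℕ) (φ : Fin d → (Fin n → ℤ)) (χ : Fin e → (Fin n → ℤ)),
    C = {ω | (∀ i, 0 ≤ ipR (φ i) ω) ∧ (∀ j, 0 < ipR (χ j) ω)}

lemma v_unit_zpow {K : Type*} [Field K] (v : AddValuation K (WithTop ℤ)) (u : Kˣ) (a : ℤ)
    (hu : v (u : K) = (a : WithTop ℤ)) (k : ℤ) :
    v ((u ^ k : Kˣ) : K) = ((k * a : ℤ) : WithTop ℤ) := by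
  induction k using Int.induction_on with
  | zero => simpa using v.map_one
  | succ k ih =>
      have h1 : (u ^ ((k : ℤ) + 1) : Kˣ) = u ^ (k : ℤ) * u := by rw [zpow_add_one]
      rw [h1, Units.val_mul, v.map_mul, ih, hu, ← WithTop.coe_add]
      congr 1
      ring
  | pred k ih =>
      have h1 : (u ^ (-(k : ℤ) - 1) : Kˣ) = u ^ (-(k : ℤ)) * u⁻¹ := by rw [zpow_sub_one]
      have hinv : v ((u⁻¹ : Kˣ) : K) = ((-a : ℤ) : WithTop ℤ) := by
        rw [Units.val_inv_eq_inv_val, v.map_inv, hu]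
        rfl
      rw [h1, Units.val_mul, v.map_mul, ih, hinv, ← WithTop.coe_add]
      congr 1
      ring

lemma v_monom {K : Type*} [Field K] {n : ℕ} (v : AddValuation K (WithTop ℤ))
    (x : Fin n → Kˣ) (ω : Fin n → ℤ) (hx : ∀ i, v ((x i : K)) = (ω i : WithTop ℤ))
    (β : Fin n → ℤ) :
    v (∏ i, ((x i ^ (β i) : Kˣ) : K)) = ((ipZ β ω : ℤ) : WithTop ℤ) := by
  have key : ∀ s : Finset (Fin n),
      v (∏ i ∈ s, ((x i ^ (β i) : Kˣ) : K)) = ((∑ i ∈ s, β i * ω i : ℤ) : WithTop ℤ) := by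
    intro s
    induction s using Finset.induction with
    | empty => simpa using v.map_one
    | @insert a s ha ih =>
        rw [Finset.prod_insert ha, Finset.sum_insert ha, v.map_mul, ih,
          v_unit_zpow v (x a) (ω a) (hx a) (β a), ← WithTop.coe_add]
  exact key Finset.univ

lemma ipR_int {n : ℕ} (β ω : Fin n → ℤ) :
    ipR β (fun i => (ω i : ℝ)) = ((ipZ β ω : ℤ) : ℝ) := by
  unfold ipR ipZ
  push_cast
  rfl

/-- Lemma 6.3(S3): if `f₁` is `C₀`-balanced with initial form on `C₀` a single
term `c X^α`, `ν(c) = 0`, and `f₁` has coefficients in the valuation ring, then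
for `x ∈ (Kˣ)ⁿ` with `ν(x) ∈ C₀ ∩ ℤⁿ` one has
`ν(f₁(x)) = ⟨α, ν(x)⟩ = ν((c X^α)(x))`; consequently the minimum of the
valuations `ν(f₁(x)), ν(f₂(x)), …, ν(f_r(x))` is unchanged upon replacing `f₁`
by `c X^α`. -/
theorem valuation_replace_balanced_by_term {K : Type*} [Field K] {n r : ℕ}
    (v : AddValuation K (WithTop ℤ))
    (hsurj : ∀ m : ℤ, ∃ y : K, v y = (m : WithTop ℤ))
    (hker : ∀ y : K, v y = ⊤ → y = 0)
    (C : Set (Fin n → ℝ)) (hC : IsRatHalfOpenCone C)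
    (f₁ : (Fin n → ℤ) →₀ K) (hf₁ : f₁ ≠ 0)
    (hcoeff : ∀ β, 0 ≤ v (f₁ β))
    (α : Fin n → ℤ) (c : K) (hc : v c = (0 : WithTop ℤ))
    (hinit : ∀ ωr ∈ C, initForm ωr f₁ = Finsupp.single α c)
    (g : Fin r → ((Fin n → ℤ) →₀ K))
    (x : Fin n → Kˣ) (ω : Fin n → ℤ)
    (hx : ∀ i, v ((x i : K)) = (ω i : WithTop ℤ))
    (hω : (fun i => (ω i : ℝ)) ∈ C) :
    v (evalL f₁ x) = (ipZ α ω : WithTop ℤ) ∧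
    v (evalL f₁ x) = v (evalL (Finsupp.single α c) x) ∧
    min (v (evalL f₁ x)) (Finset.univ.inf fun i => v (evalL (g i) x))
      = min (v (evalL (Finsupp.single α c) x))
          (Finset.univ.inf fun i => v (evalL (g i) x)) := by
  classical
  have hc0 : c ≠ 0 := by
    intro h
    rw [h, v.map_zero] at hc
    exact (WithTop.top_ne_coe (a := (0:ℤ))).elim (by exact_mod_cast hc)
  set ωr : Fin n → ℝ := fun i => (ω i : ℝ) with hωr
  have hIF := hinit ωr hω
  -- coefficient at α
  have hIFα : (initForm ωr f₁) α = c := by rw [hIF]; simp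
  rw [initForm, Finsupp.filter_apply] at hIFα
  have hPα : (∀ β ∈ f₁.support, ipR α ωr ≤ ipR β ωr) ∧ f₁ α = c := by
    by_cases hp : ∀ β ∈ f₁.support, ipR α ωr ≤ ipR β ωr
    · rw [if_pos hp] at hIFα
      exact ⟨hp, hIFα⟩
    · rw [if_neg hp] at hIFα
      exact absurd hIFα.symm hc0
  have hαsupp : α ∈ f₁.support := by
    rw [Finsupp.mem_support_iff, hPα.2]
    exact hc0
  -- strictness for other exponents
  have hstrict : ∀ β ∈ f₁.support, β ≠ α → ipZ α ω < ipZ β ω := by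
    intro β hβ hne
    have hIFβ : (initForm ωr f₁) β = 0 := by
      rw [hIF, Finsupp.single_apply, if_neg (fun h => hne h.symm)]
    rw [initForm, Finsupp.filter_apply] at hIFβ
    have hfβ : f₁ β ≠ 0 := Finsupp.mem_support_iff.mp hβ
    have hnp : ¬ ∀ γ ∈ f₁.support, ipR β ωr ≤ ipR γ ωr := by
      intro hp
      rw [if_pos hp] at hIFβ
      exact hfβ hIFβ
    push_neg at hnp
    obtain ⟨γ, hγ, hlt⟩ := hnp
    have : ipR α ωr < ipR β ωr := lt_of_le_of_lt (hPα.1 γ hγ) hlt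
    rw [ipR_int, ipR_int] at this
    exact_mod_cast this
  -- valuation of each term
  have hterm : ∀ β, v (f₁ β * ∏ i, ((x i ^ (β i) : Kˣ) : K))
      = v (f₁ β) + ((ipZ β ω : ℤ) : WithTop ℤ) := by
    intro β
    rw [v.map_mul, v_monom v x ω hx β]
  have htermα : v (f₁ α * ∏ i, ((x i ^ (α i) : Kˣ) : K)) = ((ipZ α ω : ℤ) : WithTop ℤ) := by
    rw [hterm, hPα.2, hc, zero_add]
  -- split the sum
  have hsplit : evalL f₁ x = f₁ α * ∏ i, ((x i ^ (α i) : Kˣ) : K)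
      + ∑ β ∈ f₁.support.erase α, f₁ β * ∏ i, ((x i ^ (β i) : Kˣ) : K) := by
    rw [evalL, ← Finset.add_sum_erase _ _ hαsupp]
  have hrest : ((ipZ α ω : ℤ) : WithTop ℤ)
      < v (∑ β ∈ f₁.support.erase α, f₁ β * ∏ i, ((x i ^ (β i) : Kˣ) : K)) := by
    apply v.map_lt_sum (WithTop.coe_ne_top)
    intro β hβ
    have hβs : β ∈ f₁.support := Finset.mem_of_mem_erase hβ
    have hβne : β ≠ α := Finset.ne_of_mem_erase hβ
    have h1 : ((ipZ α ω : ℤ) : WithTop ℤ) < ((ipZ β ω : ℤ) : WithTop ℤ) := by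
      exact_mod_cast hstrict β hβs hβne
    calc ((ipZ α ω : ℤ) : WithTop ℤ) < ((ipZ β ω : ℤ) : WithTop ℤ) := h1
      _ = 0 + ((ipZ β ω : ℤ) : WithTop ℤ) := (zero_add _).symm
      _ ≤ v (f₁ β) + ((ipZ β ω : ℤ) : WithTop ℤ) := add_le_add_left (hcoeff β) _
      _ = v (f₁ β * ∏ i, ((x i ^ (β i) : Kˣ) : K)) := (hterm β).symm
  have hval1 : v (evalL f₁ x) = ((ipZ α ω : ℤ) : WithTop ℤ) := by
    rw [hsplit, AddValuation.map_add_eq_of_lt_left v (htermα ▸ hrest), htermα]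
  -- evaluation of the single term
  have hsingle : evalL (Finsupp.single α c) x = c * ∏ i, ((x i ^ (α i) : Kˣ) : K) := by
    rw [evalL, Finsupp.support_single_ne_zero _ hc0, Finset.sum_singleton, Finsupp.single_eq_same]
  have hval2 : v (evalL (Finsupp.single α c) x) = ((ipZ α ω : ℤ) : WithTop ℤ) := by
    rw [hsingle, v.map_mul, hc, zero_add, v_monom v x ω hx α]
  refine ⟨hval1, hval1.trans hval2.symm, ?_⟩
  rw [hval1, hval2]
end
end
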